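/- Let α > 0 and β be real numbers and let λ be a real number. Then for every z > 0, the derivative of the function z ↦ z^{β−1} E_{α,β}(λ z^α) equals z^{β−2} E_{α,β−1}(λ z^α). -/

import Mathlib

open Filter Real Asymptotics

/-- Two-parameter Mittag-Leffler function `E_{α,β}(x) = ∑ₖ xᵏ / Γ(kα + β)`,
with the convention `1/Γ = 0` at the poles of `Γ` (in Mathlib, `Real.Gamma`
vanishes at nonpositive integers, so division by it gives `0` there). -/
noncomputable def mittagLeffler (a b x : ℝ) : ℝ := ∑' k : ℕ, x ^ k / Real.Gamma (k * a + b)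

lemma ml_gamma_div (x : ℝ) : x / Real.Gamma (x + 1) = 1 / Real.Gamma x := by
  rcases eq_or_ne x 0 with rfl | hx
  · simp [Real.Gamma_zero, Real.Gamma_one]
  · rw [Real.Gamma_add_one hx]
    rw [show x / (x * Real.Gamma x) = x * 1 / (x * Real.Gamma x) by ring,
      mul_div_mul_left _ _ hx]

lemma ml_gamma_lower {S t : ℝ} (hS : 1 ≤ S) (ht : 2 ≤ t) :
    1 / Real.Gamma t ≤ Real.exp S / S ^ (t - 2) := by
  have hS0 : (0:ℝ) < S := lt_of_lt_of_le one_pos hS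
  set n : ℕ := ⌊t⌋₊ with hn
  have hn2 : 2 ≤ n := Nat.le_floor (by exact_mod_cast ht)
  have hn2' : (2:ℝ) ≤ (n:ℝ) := by exact_mod_cast hn2
  have hnt : (n : ℝ) ≤ t := Nat.floor_le (by linarith)
  have htn : t < n + 1 := Nat.lt_floor_add_one t
  have hcast : ((n - 1 : ℕ) : ℝ) = (n : ℝ) - 1 := by
    have h1 : 1 ≤ n := by omega
    push_cast [Nat.cast_sub h1]; ring
  have hfac : ((n - 1).factorial : ℝ) ≤ Real.Gamma t := by
    have hg : Real.Gamma (((n - 1 : ℕ) : ℝ) + 1) = ((n-1).factorial : ℝ) :=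
      Real.Gamma_nat_eq_factorial (n - 1)
    have hcast2 : ((n - 1 : ℕ) : ℝ) + 1 = (n : ℝ) := by rw [hcast]; ring
    rw [hcast2] at hg
    rcases eq_or_lt_of_le hnt with heq | hlt
    · rw [← heq, hg]
    · have := Real.Gamma_strictMonoOn_Ici hn2' (le_trans hn2' hnt) hlt
      rw [hg] at this
      exact this.le
  have hfacpos : (0:ℝ) < ((n - 1).factorial : ℝ) := by exact_mod_cast (n-1).factorial_pos
  have hGpos : 0 < Real.Gamma t := lt_of_lt_of_le hfacpos hfac
  have h1 : 1 / Real.Gamma t ≤ 1 / ((n - 1).factorial : ℝ) :=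
    one_div_le_one_div_of_le hfacpos hfac
  have h2 : S ^ (n - 1) / ((n-1).factorial : ℝ) ≤ Real.exp S :=
    Real.pow_div_factorial_le_exp (x := S) hS0.le (n - 1)
  have hSpow : (0:ℝ) < S ^ (n - 1) := pow_pos hS0 _
  have h3 : 1 / ((n-1).factorial : ℝ) ≤ Real.exp S / S ^ (n - 1) := by
    rw [div_le_div_iff₀ hfacpos hSpow, one_mul]
    rw [div_le_iff₀ hfacpos] at h2
    linarith
  have h4 : S ^ (t - 2) ≤ (S : ℝ) ^ ((n - 1 : ℕ)) := by
    rw [← Real.rpow_natCast S (n - 1)]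
    apply Real.rpow_le_rpow_of_exponent_le hS
    rw [hcast]; linarith
  have h5 : Real.exp S / S ^ (n - 1) ≤ Real.exp S / S ^ (t - 2) :=
    div_le_div_of_nonneg_left (Real.exp_pos S).le (Real.rpow_pos_of_pos hS0 _) h4
  exact le_trans h1 (le_trans h3 h5)

lemma ml_summable_of_eventually {f v : ℕ → ℝ} (hv : Summable v)
    (h : ∀ᶠ k in atTop, |f k| ≤ v k) : Summable f := by
  apply summable_of_isBigO_nat hv
  rw [Asymptotics.isBigO_iff]
  refine ⟨1, ?_⟩
  filter_upwards [h] with k hk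
  simpa [Real.norm_eq_abs] using hk.trans (le_abs_self _)

lemma ml_summable_master (a b x : ℝ) (ha : 0 < a) :
    Summable (fun k : ℕ => ((k : ℝ) + 1) * |x| ^ k / Real.Gamma ((k : ℝ) * a + b)) := by
  set X : ℝ := 2 * |x| + 1 with hX
  have hX1 : (1:ℝ) ≤ X := by have := abs_nonneg x; simp only [hX]; linarith
  have hX0 : (0:ℝ) < X := lt_of_lt_of_le one_pos hX1
  set S : ℝ := X ^ (a⁻¹) with hSdef
  have hS1 : 1 ≤ S := Real.one_le_rpow hX1 (by positivity)
  have hS0 : (0:ℝ) < S := lt_of_lt_of_le one_pos hS1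
  have hSa : S ^ a = X := by
    rw [hSdef, ← Real.rpow_mul hX0.le, inv_mul_cancel₀ ha.ne', Real.rpow_one]
  set q : ℝ := |x| / X with hq
  have hq0 : 0 ≤ q := by positivity
  have hq1 : q < 1 := by
    rw [hq, div_lt_one hX0, hX]; have := abs_nonneg x; linarith
  set C : ℝ := Real.exp S / S ^ (b - 2) with hC
  have hC0 : 0 ≤ C := by positivity
  have hv : Summable (fun k : ℕ => C * (((k:ℝ) + 1) * q ^ k)) := by
    apply Summable.mul_left
    have h1 : Summable (fun k : ℕ => (k:ℝ) * q ^ k) := by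
      simpa using summable_pow_mul_geometric_of_norm_lt_one 1
        (r := q) (by rwa [Real.norm_eq_abs, abs_of_nonneg hq0])
    have h2 : Summable (fun k : ℕ => q ^ k) := summable_geometric_of_lt_one hq0 hq1
    simpa [add_mul, one_mul] using h1.add h2
  apply ml_summable_of_eventually hv
  obtain ⟨K, hK⟩ := exists_nat_ge ((2 - b) / a)
  filter_upwards [eventually_ge_atTop K] with k hk
  have hkK : ((2:ℝ) - b) / a ≤ (k:ℝ) := le_trans hK (by exact_mod_cast hk)
  have ht : 2 ≤ (k:ℝ) * a + b := by
    rw [div_le_iff₀ ha] at hkK; linarith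
  have hG : 0 < Real.Gamma ((k:ℝ) * a + b) :=
    Real.Gamma_pos_of_pos (by linarith)
  have hnn : 0 ≤ ((k:ℝ) + 1) * |x| ^ k / Real.Gamma ((k:ℝ) * a + b) := by positivity
  rw [abs_of_nonneg hnn]
  have key : S ^ ((k:ℝ) * a + b - 2) = (S ^ a) ^ k * S ^ (b - 2) := by
    rw [show (k:ℝ) * a + b - 2 = a * (k:ℝ) + (b - 2) by ring, Real.rpow_add hS0,
      Real.rpow_mul hS0.le, Real.rpow_natCast]
  calc ((k:ℝ) + 1) * |x| ^ k / Real.Gamma ((k:ℝ) * a + b)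
      = ((k:ℝ) + 1) * |x| ^ k * (1 / Real.Gamma ((k:ℝ) * a + b)) := by ring
    _ ≤ ((k:ℝ) + 1) * |x| ^ k * (Real.exp S / S ^ ((k:ℝ) * a + b - 2)) := by
        apply mul_le_mul_of_nonneg_left (ml_gamma_lower hS1 ht) (by positivity)
    _ = C * (((k:ℝ) + 1) * q ^ k) := by
        rw [key, hSa]
        have hXk : (0:ℝ) < X ^ k := pow_pos hX0 k
        have hSb : (0:ℝ) < S ^ (b - 2) := Real.rpow_pos_of_pos hS0 _
        rw [hC, hq, div_pow]
        field_simp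

lemma ml_rpow_split (c d : ℝ) (k : ℕ) {y : ℝ} (hy : 0 < y) :
    y ^ ((k:ℝ) * c + d) = (y ^ c) ^ k * y ^ d := by
  rw [Real.rpow_add hy, ← Real.rpow_natCast (y ^ c) k, ← Real.rpow_mul hy.le, mul_comm c]

lemma ml_term_eq (α β lam : ℝ) (k : ℕ) {y : ℝ} (hy : 0 < y) :
    y ^ (β - 1) * ((lam * y ^ α) ^ k / Real.Gamma ((k:ℝ) * α + β))
      = lam ^ k / Real.Gamma ((k:ℝ) * α + β) * y ^ ((k:ℝ) * α + β - 1) := by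
  rw [show (k:ℝ) * α + β - 1 = (k:ℝ) * α + (β - 1) by ring, ml_rpow_split α (β-1) k hy,
    mul_pow]
  ring

lemma ml_term'_eq (α β lam : ℝ) (k : ℕ) {y : ℝ} (hy : 0 < y) :
    lam ^ k / Real.Gamma ((k:ℝ) * α + β) * (((k:ℝ) * α + β - 1) * y ^ ((k:ℝ) * α + β - 2))
      = y ^ (β - 2) * ((lam * y ^ α) ^ k / Real.Gamma ((k:ℝ) * α + (β - 1))) := by
  have hg : ((k:ℝ) * α + β - 1) / Real.Gamma ((k:ℝ) * α + β)
      = 1 / Real.Gamma ((k:ℝ) * α + (β - 1)) := by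
    have h := ml_gamma_div ((k:ℝ) * α + (β - 1))
    rw [show (k:ℝ) * α + (β - 1) + 1 = (k:ℝ) * α + β by ring] at h
    rw [← h]; ring_nf
  rw [show (k:ℝ) * α + β - 2 = (k:ℝ) * α + (β - 2) by ring, ml_rpow_split α (β-2) k hy,
    mul_pow]
  calc lam ^ k / Real.Gamma ((k:ℝ) * α + β)
        * (((k:ℝ) * α + β - 1) * ((y ^ α) ^ k * y ^ (β - 2)))
      = (((k:ℝ) * α + β - 1) / Real.Gamma ((k:ℝ) * α + β))
        * (lam ^ k * ((y ^ α) ^ k * y ^ (β - 2))) := by ring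
    _ = (1 / Real.Gamma ((k:ℝ) * α + (β - 1)))
        * (lam ^ k * ((y ^ α) ^ k * y ^ (β - 2))) := by rw [hg]
    _ = y ^ (β - 2) * (lam ^ k * (y ^ α) ^ k / Real.Gamma ((k:ℝ) * α + (β - 1))) := by ring

lemma ml_hasDerivAt (α β lam : ℝ) (k : ℕ) {y : ℝ} (hy : 0 < y) :
    HasDerivAt (fun w : ℝ => lam ^ k / Real.Gamma ((k:ℝ) * α + β) * w ^ ((k:ℝ) * α + β - 1))
      (lam ^ k / Real.Gamma ((k:ℝ) * α + β)
        * (((k:ℝ) * α + β - 1) * y ^ ((k:ℝ) * α + β - 2))) y := by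
  have h := (Real.hasDerivAt_rpow_const (x := y) (p := (k:ℝ) * α + β - 1)
    (Or.inl hy.ne')).const_mul (lam ^ k / Real.Gamma ((k:ℝ) * α + β))
  refine h.congr_deriv ?_
  rw [show (k:ℝ) * α + β - 1 - 1 = (k:ℝ) * α + β - 2 by ring]

theorem mittagLeffler_deriv
    (α β lam : ℝ) (hα : 0 < α) :
    ∀ z > (0 : ℝ),
      deriv (fun z : ℝ => z ^ (β - 1) * mittagLeffler α β (lam * z ^ α)) z
        = z ^ (β - 2) * mittagLeffler α (β - 1) (lam * z ^ α) := by
  intro z hz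
  have hz2 : (0:ℝ) < z / 2 := by linarith
  have h2z : (0:ℝ) < 2 * z := by linarith
  set M : ℝ := max ((z/2) ^ (β - 2)) ((2*z) ^ (β - 2)) with hM
  have hM0 : 0 ≤ M := le_trans (Real.rpow_pos_of_pos hz2 _).le (le_max_left _ _)
  set g : ℕ → ℝ → ℝ :=
    fun k w => lam ^ k / Real.Gamma ((k:ℝ) * α + β) * w ^ ((k:ℝ) * α + β - 1) with hg
  set g' : ℕ → ℝ → ℝ := fun k w => lam ^ k / Real.Gamma ((k:ℝ) * α + β)
    * (((k:ℝ) * α + β - 1) * w ^ ((k:ℝ) * α + β - 2)) with hg'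
  set u : ℕ → ℝ := fun k => |lam ^ k / Real.Gamma ((k:ℝ) * α + β) * ((k:ℝ) * α + β - 1)|
    * (((2*z) ^ α) ^ k * M) with hu
  -- eventual bound helper
  obtain ⟨K, hK⟩ := exists_nat_ge ((2 - β) / α)
  have hev : ∀ k : ℕ, K ≤ k → 2 ≤ (k:ℝ) * α + β := by
    intro k hk
    have : ((2:ℝ) - β) / α ≤ (k:ℝ) := le_trans hK (by exact_mod_cast hk)
    rw [div_le_iff₀ hα] at this; linarith
  -- summability of u
  have husum : Summable u := by
    apply ml_summable_of_eventually
      ((ml_summable_master α β (lam * (2*z) ^ α) hα).mul_left (M * (α + |β - 1|)))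
    filter_upwards [eventually_ge_atTop K] with k hk
    have ht := hev k hk
    have hG : 0 < Real.Gamma ((k:ℝ) * α + β) := Real.Gamma_pos_of_pos (by linarith)
    have hp1 : (0:ℝ) ≤ (k:ℝ) * α + β - 1 := by linarith
    have hrp : (0:ℝ) < (2*z) ^ α := Real.rpow_pos_of_pos h2z α
    have hun : 0 ≤ u k := by
      apply mul_nonneg (abs_nonneg _) (mul_nonneg (pow_nonneg hrp.le _) hM0)
    rw [abs_of_nonneg hun]
    show |lam ^ k / Real.Gamma ((k:ℝ) * α + β) * ((k:ℝ) * α + β - 1)|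
        * (((2*z) ^ α) ^ k * M) ≤ _
    have habs : |lam ^ k / Real.Gamma ((k:ℝ) * α + β) * ((k:ℝ) * α + β - 1)|
        = |lam| ^ k / Real.Gamma ((k:ℝ) * α + β) * ((k:ℝ) * α + β - 1) := by
      rw [abs_mul, abs_div, abs_pow, abs_of_pos hG, abs_of_nonneg hp1]
    have hxk : |lam * (2*z) ^ α| ^ k = |lam| ^ k * ((2*z) ^ α) ^ k := by
      rw [abs_mul, abs_of_pos hrp, mul_pow]
    have hpoly : (k:ℝ) * α + β - 1 ≤ (α + |β - 1|) * ((k:ℝ) + 1) := by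
      have h1 : β - 1 ≤ |β - 1| := le_abs_self _
      have h2 : (0:ℝ) ≤ |β - 1| := abs_nonneg _
      have h3 : (0:ℝ) ≤ (k:ℝ) := Nat.cast_nonneg k
      nlinarith
    rw [habs]
    calc |lam| ^ k / Real.Gamma ((k:ℝ) * α + β) * ((k:ℝ) * α + β - 1)
          * (((2*z) ^ α) ^ k * M)
        ≤ |lam| ^ k / Real.Gamma ((k:ℝ) * α + β) * ((α + |β - 1|) * ((k:ℝ) + 1))
          * (((2*z) ^ α) ^ k * M) := by
          apply mul_le_mul_of_nonneg_right _ (mul_nonneg (pow_nonneg hrp.le _) hM0)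
          exact mul_le_mul_of_nonneg_left hpoly (by positivity)
      _ = M * (α + |β - 1|)
          * (((k:ℝ) + 1) * |lam * (2*z) ^ α| ^ k / Real.Gamma ((k:ℝ) * α + β)) := by
          rw [hxk]; ring
  -- summability at z
  have hg0 : Summable (fun k => g k z) := by
    apply ml_summable_of_eventually
      ((ml_summable_master α β (lam * z ^ α) hα).mul_left (z ^ (β - 1)))
    filter_upwards [eventually_ge_atTop K] with k hk
    have ht := hev k hk
    have hG : 0 < Real.Gamma ((k:ℝ) * α + β) := Real.Gamma_pos_of_pos (by linarith)
    have hrp : (0:ℝ) < z ^ α := Real.rpow_pos_of_pos hz α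
    have hxk : |lam * z ^ α| ^ k = |lam| ^ k * (z ^ α) ^ k := by
      rw [abs_mul, abs_of_pos hrp, mul_pow]
    have hzp : (0:ℝ) < z ^ ((k:ℝ) * α + β - 1) := Real.rpow_pos_of_pos hz _
    show |lam ^ k / Real.Gamma ((k:ℝ) * α + β) * z ^ ((k:ℝ) * α + β - 1)| ≤ _
    rw [abs_mul, abs_div, abs_pow, abs_of_pos hG, abs_of_pos hzp,
      show (k:ℝ) * α + β - 1 = (k:ℝ) * α + (β - 1) by ring, ml_rpow_split α (β-1) k hz]
    calc |lam| ^ k / Real.Gamma ((k:ℝ) * α + β) * ((z ^ α) ^ k * z ^ (β - 1))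
        ≤ ((k:ℝ) + 1) * (|lam| ^ k / Real.Gamma ((k:ℝ) * α + β) * ((z ^ α) ^ k * z ^ (β - 1))) := by
          nlinarith [mul_nonneg (div_nonneg (pow_nonneg (abs_nonneg lam) k) hG.le)
            (mul_nonneg (pow_nonneg hrp.le k) (Real.rpow_pos_of_pos hz (β-1)).le),
            (Nat.cast_nonneg k : (0:ℝ) ≤ (k:ℝ))]
      _ = z ^ (β - 1) * (((k:ℝ) + 1) * |lam * z ^ α| ^ k / Real.Gamma ((k:ℝ) * α + β)) := by
          rw [hxk]; ring
  -- uniform bound on derivatives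
  have hbound : ∀ (k : ℕ) (y : ℝ), y ∈ Set.Ioo (z/2) (2*z) → ‖g' k y‖ ≤ u k := by
    intro k y hy
    have hy0 : 0 < y := lt_trans hz2 hy.1
    have hyle : y ≤ 2 * z := hy.2.le
    have hsplit : y ^ ((k:ℝ) * α + β - 2) = (y ^ α) ^ k * y ^ (β - 2) := by
      rw [show (k:ℝ) * α + β - 2 = (k:ℝ) * α + (β - 2) by ring, ml_rpow_split α (β-2) k hy0]
    have h1 : (y ^ α) ^ k ≤ ((2*z) ^ α) ^ k :=
      pow_le_pow_left₀ (Real.rpow_nonneg hy0.le α) (Real.rpow_le_rpow hy0.le hyle hα.le) k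
    have h2 : y ^ (β - 2) ≤ M := by
      rcases le_or_gt 0 (β - 2) with h | h
      · exact le_trans (Real.rpow_le_rpow hy0.le hyle h) (le_max_right _ _)
      · exact le_trans (Real.rpow_le_rpow_of_nonpos hz2 hy.1.le h.le) (le_max_left _ _)
    have h3 : y ^ ((k:ℝ) * α + β - 2) ≤ ((2*z) ^ α) ^ k * M := by
      rw [hsplit]
      exact mul_le_mul h1 h2 (Real.rpow_nonneg hy0.le _) (pow_nonneg (Real.rpow_nonneg h2z.le α) k)
    have hre : g' k y = (lam ^ k / Real.Gamma ((k:ℝ) * α + β) * ((k:ℝ) * α + β - 1))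
        * y ^ ((k:ℝ) * α + β - 2) := by rw [hg']; ring
    rw [Real.norm_eq_abs, hre, abs_mul, abs_of_pos (Real.rpow_pos_of_pos hy0 _)]
    exact mul_le_mul_of_nonneg_left h3 (abs_nonneg _)
  -- the derivative of the series
  have HD : HasDerivAt (fun w => ∑' k, g k w) (∑' k, g' k z) z :=
    hasDerivAt_tsum_of_isPreconnected husum isOpen_Ioo isPreconnected_Ioo
      (fun k y hy => ml_hasDerivAt α β lam k (lt_trans hz2 hy.1))
      hbound (⟨by linarith, by linarith⟩ : z ∈ Set.Ioo (z/2) (2*z)) hg0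
      ⟨by linarith, by linarith⟩
  have heq : (fun y : ℝ => y ^ (β - 1) * mittagLeffler α β (lam * y ^ α))
      =ᶠ[nhds z] fun y => ∑' k, g k y := by
    filter_upwards [eventually_gt_nhds hz] with y hy
    rw [mittagLeffler, ← tsum_mul_left]
    exact tsum_congr fun k => ml_term_eq α β lam k hy
  rw [heq.deriv_eq, HD.deriv]
  have hfin : ∀ k : ℕ, g' k z
      = z ^ (β - 2) * ((lam * z ^ α) ^ k / Real.Gamma ((k:ℝ) * α + (β - 1))) :=
    fun k => ml_term'_eq α β lam k hz
  rw [tsum_congr hfin, tsum_mul_left, mittagLeffler]
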